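/- If f ∈ ℂ[x^{±1}, y^{±1}] is (φ,h)-mutable for a mutation datum (φ,h) and f is normalized, then the mutation mut_{(φ,h)} f is normalized, provided h is normalized. -/

import Mathlib

noncomputable section

/-- The ring of Laurent polynomials in two variables over ℂ. -/
abbrev A2 : Type := AddMonoidAlgebra ℂ (ℤ × ℤ)

def emb (p : ℤ × ℤ) : ℝ × ℝ := ((p.1 : ℝ), (p.2 : ℝ))

def newt (f : A2) : Set (ℝ × ℝ) := convexHull ℝ (emb '' (f.coeff.support : Set (ℤ × ℤ)))

/-- `f` is normalized if its coefficient at every vertex (extreme point) of its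
Newton polygon is `1`. -/
def IsNormalized (f : A2) : Prop :=
  ∀ p : ℤ × ℤ, emb p ∈ Set.extremePoints ℝ (newt f) → f.coeff p = 1

/-- The part of `f` on the level set `(φ = k)` of the affine-linear function
`φ(p) = c + l(p)`. -/
def part (c : ℤ) (l : (ℤ × ℤ) →ₗ[ℤ] ℤ) (f : A2) (k : ℤ) : A2 :=
  AddMonoidAlgebra.ofCoeff (Finsupp.filter (fun p : ℤ × ℤ => c + l p = k) f.coeff)

namespace MutAux

abbrev B : Type := ℝ ×ₗ Lex (ℤ × ℤ)

lemma emb_add (p q : ℤ × ℤ) : emb (p + q) = emb p + emb q := by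
  simp only [emb, Prod.ext_iff, Prod.fst_add, Prod.snd_add]
  constructor <;> push_cast <;> ring

lemma emb_inj : Function.Injective emb := by
  intro p q hpq
  simp only [emb, Prod.ext_iff] at hpq
  exact Prod.ext (by exact_mod_cast hpq.1) (by exact_mod_cast hpq.2)

lemma lift1 (l : (ℤ × ℤ) →ₗ[ℤ] ℤ) :
    ∃ L : (ℝ × ℝ) →ₗ[ℝ] ℝ, ∀ p : ℤ × ℤ, L (emb p) = (l p : ℝ) := by
  refine ⟨(l (1, 0) : ℝ) • LinearMap.fst ℝ ℝ ℝ + (l (0, 1) : ℝ) • LinearMap.snd ℝ ℝ ℝ, ?_⟩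
  intro p
  have hp : p = p.1 • ((1, 0) : ℤ × ℤ) + p.2 • ((0, 1) : ℤ × ℤ) := by
    ext <;> simp
  have hlp : l p = p.1 * l (1, 0) + p.2 * l (0, 1) := by
    conv_lhs => rw [hp]
    rw [map_add, map_smul, map_smul]
    simp [smul_eq_mul]
  rw [hlp]
  simp only [LinearMap.add_apply, LinearMap.smul_apply, LinearMap.fst_apply,
    LinearMap.snd_apply, smul_eq_mul, emb]
  push_cast
  ring

lemma lift2 (T : (ℤ × ℤ) →ₗ[ℤ] ℤ × ℤ) :
    ∃ Tt : (ℝ × ℝ) →ₗ[ℝ] ℝ × ℝ, ∀ p : ℤ × ℤ, Tt (emb p) = emb (T p) := by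
  obtain ⟨L1, h1⟩ := lift1 ((LinearMap.fst ℤ ℤ ℤ).comp T)
  obtain ⟨L2, h2⟩ := lift1 ((LinearMap.snd ℤ ℤ ℤ).comp T)
  refine ⟨L1.prod L2, fun p => ?_⟩
  have e1 := h1 p
  have e2 := h2 p
  simp only [LinearMap.coe_comp, Function.comp_apply, LinearMap.fst_apply,
    LinearMap.snd_apply] at e1 e2
  simp only [emb] at e1 e2 ⊢
  simp [LinearMap.prod_apply, Prod.ext_iff, e1, e2]

lemma eq_of_sum (S : Finset (ℤ × ℤ)) (v g : (ℤ × ℤ) → ℝ) (M : ℝ)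
    (hv : ∀ p ∈ S, 0 ≤ v p) (hb : ∀ p ∈ S, v p ≠ 0 → g p ≤ M)
    (hsum : ∑ p ∈ S, v p * g p = M) (hv1 : ∑ p ∈ S, v p = 1) :
    ∀ p ∈ S, v p ≠ 0 → g p = M := by
  have h0 : ∑ p ∈ S, v p * (M - g p) = 0 := by
    have : ∑ p ∈ S, v p * (M - g p) = (∑ p ∈ S, v p) * M - ∑ p ∈ S, v p * g p := by
      rw [Finset.sum_mul]
      rw [← Finset.sum_sub_distrib]
      congr 1
      ext p
      ring
    rw [this, hv1, hsum, one_mul, sub_self]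
  have hnn : ∀ p ∈ S, 0 ≤ v p * (M - g p) := by
    intro p hp
    by_cases hvp : v p = 0
    · simp [hvp]
    · exact mul_nonneg (hv p hp) (sub_nonneg.2 (hb p hp hvp))
  have hz := (Finset.sum_eq_zero_iff_of_nonneg hnn).1 h0
  intro p hp hvp
  have := hz p hp
  rcases mul_eq_zero.1 this with h | h
  · exact absurd h hvp
  · linarith [sub_eq_zero.1 h]

lemma exists_weights (S : Finset (ℤ × ℤ)) (x : ℝ × ℝ)
    (hx : x ∈ convexHull ℝ (emb '' (S : Set (ℤ × ℤ)))) :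
    ∃ u : (ℤ × ℤ) → ℝ, (∀ p ∈ S, 0 ≤ u p) ∧ ∑ p ∈ S, u p = 1 ∧
      ∑ p ∈ S, u p • emb p = x := by
  have himg : emb '' (S : Set (ℤ × ℤ)) = ((S.image emb : Finset (ℝ × ℝ)) : Set (ℝ × ℝ)) := by
    simp [Finset.coe_image]
  rw [himg, Finset.convexHull_eq] at hx
  obtain ⟨w, hw0, hw1, hwc⟩ := hx
  have hinj : ∀ p ∈ S, ∀ p' ∈ S, emb p = emb p' → p = p' := fun p _ p' _ h => emb_inj h
  refine ⟨fun p => w (emb p), fun p hp => hw0 _ (Finset.mem_image_of_mem emb hp), ?_, ?_⟩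
  · rw [← hw1]
    exact (Finset.sum_image hinj).symm
  · rw [Finset.centerMass_eq_of_sum_1 _ id hw1] at hwc
    rw [← hwc]
    exact (Finset.sum_image (f := fun y => w y • id y) hinj).symm

/-- The lexicographic (functional, tiebreak) maximum of the support is an
extreme point of the Newton polygon. -/
lemma extreme_of_max (S : Finset (ℤ × ℤ)) (r : ℤ × ℤ) (hr : r ∈ S)
    (Ψ : (ℝ × ℝ) →ₗ[ℝ] ℝ) (T : (ℤ × ℤ) →ₗ[ℤ] ℤ × ℤ) (hT : Function.Injective T)
    (hmax : ∀ p ∈ S, Ψ (emb p) ≤ Ψ (emb r) ∧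
      (Ψ (emb p) = Ψ (emb r) → toLex (T p) ≤ toLex (T r))) :
    emb r ∈ Set.extremePoints ℝ (convexHull ℝ (emb '' (S : Set (ℤ × ℤ)))) := by
  obtain ⟨Tt, hTt⟩ := lift2 T
  rw [mem_extremePoints]
  refine ⟨subset_convexHull ℝ _ ⟨r, hr, rfl⟩, ?_⟩
  intro x₁ hx₁ x₂ hx₂ hseg
  obtain ⟨u₁, hu₁0, hu₁1, hu₁x⟩ := exists_weights S x₁ hx₁
  obtain ⟨u₂, hu₂0, hu₂1, hu₂x⟩ := exists_weights S x₂ hx₂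
  obtain ⟨a, b, ha, hb, hab, hx⟩ := hseg
  set v : (ℤ × ℤ) → ℝ := fun p => a * u₁ p + b * u₂ p with hv
  have hv0 : ∀ p ∈ S, 0 ≤ v p := fun p hp =>
    add_nonneg (mul_nonneg ha.le (hu₁0 p hp)) (mul_nonneg hb.le (hu₂0 p hp))
  have hv1 : ∑ p ∈ S, v p = 1 := by
    simp only [hv]
    rw [Finset.sum_add_distrib, ← Finset.mul_sum, ← Finset.mul_sum, hu₁1, hu₂1,
      mul_one, mul_one]
    exact hab
  have hvx : ∑ p ∈ S, v p • emb p = emb r := by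
    simp only [hv, add_smul, mul_smul]
    rw [Finset.sum_add_distrib, ← Finset.smul_sum, ← Finset.smul_sum, hu₁x, hu₂x]
    exact hx
  have hfun : ∀ G : (ℝ × ℝ) →ₗ[ℝ] ℝ, ∑ p ∈ S, v p * G (emb p) = G (emb r) := by
    intro G
    have hG := congrArg G hvx
    rw [map_sum] at hG
    simpa only [map_smul, smul_eq_mul] using hG
  -- stage 1 : the functional values agree
  have hs1 : ∀ p ∈ S, v p ≠ 0 → Ψ (emb p) = Ψ (emb r) :=
    eq_of_sum S v (fun p => Ψ (emb p)) _ hv0 (fun p hp _ => (hmax p hp).1) (hfun Ψ) hv1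
  have hlex : ∀ p ∈ S, v p ≠ 0 → toLex (T p) ≤ toLex (T r) := fun p hp hvp =>
    (hmax p hp).2 (hs1 p hp hvp)
  -- stage 2 : first coordinates of T agree
  have hsum2 : ∑ p ∈ S, v p * ((T p).1 : ℝ) = ((T r).1 : ℝ) := by
    have h2 := hfun ((LinearMap.fst ℝ ℝ ℝ).comp Tt)
    simp only [LinearMap.coe_comp, Function.comp_apply, hTt, LinearMap.fst_apply] at h2
    simpa only [emb] using h2
  have hs2' : ∀ p ∈ S, v p ≠ 0 → ((T p).1 : ℝ) = ((T r).1 : ℝ) :=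
    eq_of_sum S v (fun p => ((T p).1 : ℝ)) _ hv0 (fun p' hp' hvp' => by
      show ((T p').1 : ℝ) ≤ ((T r).1 : ℝ)
      rcases (Prod.Lex.le_iff (x := toLex (T p')) (y := toLex (T r))).1 (hlex p' hp' hvp') with hlt | heq
      · exact_mod_cast (show (T p').1 < (T r).1 from hlt).le
      · exact_mod_cast (show (T p').1 = (T r).1 from heq.1).le) hsum2 hv1
  have hs2 : ∀ p ∈ S, v p ≠ 0 → (T p).1 = (T r).1 := fun p hp hvp => by
    exact_mod_cast hs2' p hp hvp
  -- stage 3 : second coordinates of T agree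
  have hsum3 : ∑ p ∈ S, v p * ((T p).2 : ℝ) = ((T r).2 : ℝ) := by
    have h3 := hfun ((LinearMap.snd ℝ ℝ ℝ).comp Tt)
    simp only [LinearMap.coe_comp, Function.comp_apply, hTt, LinearMap.snd_apply] at h3
    simpa only [emb] using h3
  have hs3' : ∀ p ∈ S, v p ≠ 0 → ((T p).2 : ℝ) = ((T r).2 : ℝ) :=
    eq_of_sum S v (fun p => ((T p).2 : ℝ)) _ hv0 (fun p' hp' hvp' => by
      show ((T p').2 : ℝ) ≤ ((T r).2 : ℝ)
      rcases (Prod.Lex.le_iff (x := toLex (T p')) (y := toLex (T r))).1 (hlex p' hp' hvp') with hlt | heq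
      · exact absurd (hs2 p' hp' hvp') (ne_of_lt hlt)
      · exact_mod_cast (show (T p').2 ≤ (T r).2 from heq.2)) hsum3 hv1
  have hs3 : ∀ p ∈ S, v p ≠ 0 → (T p).2 = (T r).2 := fun p hp hvp => by
    exact_mod_cast hs3' p hp hvp
  have hone : ∀ p ∈ S, v p ≠ 0 → p = r := by
    intro p hp hvp
    exact hT (Prod.ext (hs2 p hp hvp) (hs3 p hp hvp))
  have huz : ∀ p ∈ S, p ≠ r → u₁ p = 0 ∧ u₂ p = 0 := by
    intro p hp hpr
    have hvz : v p = 0 := by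
      by_contra hne
      exact hpr (hone p hp hne)
    have h1 := (add_eq_zero_iff_of_nonneg (mul_nonneg ha.le (hu₁0 p hp))
      (mul_nonneg hb.le (hu₂0 p hp))).1 hvz
    constructor
    · rcases mul_eq_zero.1 h1.1 with h | h
      · exact absurd h ha.ne'
      · exact h
    · rcases mul_eq_zero.1 h1.2 with h | h
      · exact absurd h hb.ne'
      · exact h
  have key : ∀ (u : (ℤ × ℤ) → ℝ), (∀ p ∈ S, p ≠ r → u p = 0) →
      (∑ p ∈ S, u p = 1) → (∑ p ∈ S, u p • emb p = x₁ → x₁ = emb r) := by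
    intro u hu0 hu1 hux
    have hsum : ∑ p ∈ S, u p • emb p = u r • emb r :=
      Finset.sum_eq_single_of_mem r hr (fun p hp hpr => by rw [hu0 p hp hpr, zero_smul])
    have h1 : u r = 1 := by
      have := Finset.sum_eq_single_of_mem r hr (f := u) (fun p hp hpr => hu0 p hp hpr)
      rw [hu1] at this
      exact this.symm
    rw [← hux, hsum, h1, one_smul]
  constructor
  · exact key u₁ (fun p hp hpr => (huz p hp hpr).1) hu₁1 hu₁x
  · have key2 : ∑ p ∈ S, u₂ p • emb p = u₂ r • emb r :=
      Finset.sum_eq_single_of_mem r hr (fun p hp hpr => by rw [(huz p hp hpr).2, zero_smul])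
    have h1 : u₂ r = 1 := by
      have := Finset.sum_eq_single_of_mem r hr (f := u₂) (fun p hp hpr => (huz p hp hpr).2)
      rw [hu₂1] at this
      exact this.symm
    rw [← hu₂x, key2, h1, one_smul]

lemma key_mul (D : (ℤ × ℤ) → B) (hadd : ∀ a b : ℤ × ℤ, D (a + b) = D a + D b)
    (hinj : Function.Injective D) (f g : A2) (a b : ℤ × ℤ)
    (ha : ∀ x ∈ f.coeff.support, D x ≤ D a) (hb : ∀ x ∈ g.coeff.support, D x ≤ D b) :
    (∀ x ∈ (f * g).coeff.support, D x ≤ D (a + b)) ∧ (f * g).coeff (a + b) = f.coeff a * g.coeff b := by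
  constructor
  · intro m hm
    rw [Finsupp.mem_support_iff, AddMonoidAlgebra.mul_apply] at hm
    rw [Finsupp.sum] at hm
    obtain ⟨x, hx, hxne⟩ := Finset.exists_ne_zero_of_sum_ne_zero hm
    rw [Finsupp.sum] at hxne
    obtain ⟨y, hy, hyne⟩ := Finset.exists_ne_zero_of_sum_ne_zero hxne
    by_cases hxy : x + y = m
    · calc D m = D x + D y := by rw [← hxy, hadd]
      _ ≤ D a + D b := add_le_add (ha x hx) (hb y hy)
      _ = D (a + b) := (hadd a b).symm
    · simp [hxy] at hyne
  · rw [AddMonoidAlgebra.mul_apply]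
    rw [Finsupp.sum]
    simp only [Finsupp.sum]
    rw [Finset.sum_eq_single a]
    · have hcond : ∀ y : ℤ × ℤ, (a + y = a + b) ↔ (y = b) := fun y => add_right_inj a
      simp only [hcond]
      rw [Finset.sum_ite_eq' g.coeff.support b (fun y => f.coeff a * g.coeff y)]
      by_cases hbs : b ∈ g.coeff.support
      · simp [hbs]
      · simp [hbs, Finsupp.notMem_support_iff.1 hbs]
    · intro x hx hxa
      apply Finset.sum_eq_zero
      intro y hy
      by_cases hxy : x + y = a + b
      · exfalso
        have hDx : D x < D a := lt_of_le_of_ne (ha x hx) (fun hDe => hxa (hinj hDe))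
        have hlt : D x + D y < D a + D b := add_lt_add_of_lt_of_le hDx (hb y hy)
        have heq : D x + D y = D a + D b := by rw [← hadd, hxy, hadd]
        exact absurd heq (ne_of_lt hlt)
      · simp [hxy]
    · intro hna
      apply Finset.sum_eq_zero
      intro y hy
      have : f.coeff a = 0 := Finsupp.notMem_support_iff.1 hna
      simp [this]

lemma key_pow (D : (ℤ × ℤ) → B) (hadd : ∀ a b : ℤ × ℤ, D (a + b) = D a + D b)
    (hinj : Function.Injective D) (h : A2) (w : ℤ × ℤ)
    (hw : ∀ x ∈ h.coeff.support, D x ≤ D w) (n : ℕ) :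
    (∀ x ∈ (h ^ n).coeff.support, D x ≤ D (n • w)) ∧ (h ^ n).coeff (n • w) = (h.coeff w) ^ n := by
  induction n with
  | zero =>
    constructor
    · intro x hx
      rw [pow_zero] at hx
      have hx0 : x = 0 := by
        have h1 : (1 : A2) = AddMonoidAlgebra.single (0 : ℤ × ℤ) (1 : ℂ) := AddMonoidAlgebra.one_def
        rw [h1] at hx
        simpa using Finsupp.support_single_subset hx
      rw [hx0, zero_nsmul]
    · rw [pow_zero, zero_nsmul, pow_zero]
      have h1 : (1 : A2) = AddMonoidAlgebra.single (0 : ℤ × ℤ) (1 : ℂ) := AddMonoidAlgebra.one_def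
      rw [h1]
      simp
  | succ n ih =>
    have hk := key_mul D hadd hinj (h ^ n) h (n • w) w ih.1 hw
    rw [pow_succ, succ_nsmul]
    exact ⟨hk.1, by rw [hk.2, ih.2, pow_succ]⟩

end MutAux

open MutAux

/-- The mutation of a normalized `(φ,h)`-mutable Laurent polynomial is
normalized, provided `h` is normalized. Here the affine-linear function is
`φ(p) = c + l(p)` with nonzero linear part `l`, `h` is supported on `ker l`,
`f` is `(φ,h)`-mutable, and `μ = mut_{(φ,h)} f` is characterized level by
level: its level-`k` part is `h^k` times the level-`k` part of `f`. -/
theorem mutation_of_normalized_is_normalized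
    (c : ℤ) (l : (ℤ × ℤ) →ₗ[ℤ] ℤ) (hl : l ≠ 0)
    (h : A2) (hh : h ≠ 0) (hker : ∀ p ∈ h.coeff.support, l p = 0) (hhn : IsNormalized h)
    (f : A2) (hfn : IsNormalized f)
    (hmut : ∀ k : ℤ, k < 0 → h ^ (-k).toNat ∣ part c l f k)
    (μ : A2)
    (hμpos : ∀ k : ℤ, 0 ≤ k → part c l μ k = h ^ k.toNat * part c l f k)
    (hμneg : ∀ k : ℤ, k < 0 → h ^ (-k).toNat * part c l μ k = part c l f k) :
    IsNormalized μ := by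
  classical
  intro q hq
  -- `q` lies in the support of `μ`
  have hqS : q ∈ μ.coeff.support := by
    obtain ⟨p, hp, hpe⟩ := extremePoints_convexHull_subset hq
    rwa [emb_inj hpe] at hp
  -- `q` is not in the hull of the other support points
  have hqnot : emb q ∉ convexHull ℝ (emb '' ((μ.coeff.support : Set (ℤ × ℤ)) \ {q})) := by
    intro hin
    have hsub : convexHull ℝ (emb '' ((μ.coeff.support : Set (ℤ × ℤ)) \ {q})) ⊆ newt μ :=
      convexHull_mono (Set.image_mono Set.diff_subset)
    have hq2 : emb q ∈ Set.extremePoints ℝ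
        (convexHull ℝ (emb '' ((μ.coeff.support : Set (ℤ × ℤ)) \ {q}))) :=
      ⟨hin, fun x₁ h₁ x₂ h₂ hseg => hq.2 (hsub h₁) (hsub h₂) hseg⟩
    obtain ⟨p, hp, hpe⟩ := extremePoints_convexHull_subset hq2
    exact hp.2 (emb_inj hpe)
  -- a separating functional
  have hfin : (emb '' ((μ.coeff.support : Set (ℤ × ℤ)) \ {q})).Finite :=
    ((μ.coeff.support.finite_toSet).diff).image _
  obtain ⟨ψ, u, hu1, hu2⟩ := geometric_hahn_banach_closed_point
    (convex_convexHull ℝ _) (hfin.isCompact_convexHull (𝕜 := ℝ)).isClosed hqnot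
  have hstrict : ∀ p ∈ μ.coeff.support, p ≠ q → ψ (emb p) < ψ (emb q) := by
    intro p hp hpq
    exact lt_trans (hu1 _ (subset_convexHull ℝ _ ⟨p, ⟨hp, hpq⟩, rfl⟩)) hu2
  -- the order function
  set D : (ℤ × ℤ) → B := fun p => toLex (ψ (emb p), toLex p) with hDdef
  have hDadd : ∀ a b : ℤ × ℤ, D (a + b) = D a + D b := by
    intro a b
    simp only [hDdef, emb_add, map_add]
    rfl
  have hDinj : Function.Injective D := by
    intro p p' hpp'
    have h2 := congrArg (fun x : B => (ofLex x).2) hpp'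
    simpa [hDdef] using h2
  have hDq : ∀ p ∈ μ.coeff.support, D p ≤ D q := by
    intro p hp
    rcases eq_or_ne p q with rfl | hne
    · exact le_refl _
    · simp only [hDdef]
      exact (Prod.Lex.le_iff).2 (Or.inl (hstrict p hp hne))
  have hD0 : D 0 = 0 := by
    have h00 : D 0 + D 0 = D 0 + 0 := by rw [← hDadd, add_zero, add_zero]
    exact add_left_cancel h00
  have hDns : ∀ (n : ℕ) (p : ℤ × ℤ), D (n • p) = n • D p := by
    intro n p
    induction n with
    | zero => simpa using hD0
    | succ n ih => rw [succ_nsmul, succ_nsmul, hDadd, ih]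
  -- the top point of h
  have hhs : h.coeff.support.Nonempty := Finsupp.support_nonempty_iff.2 (fun e => hh (AddMonoidAlgebra.coeff_eq_zero.1 e))
  obtain ⟨w, hwS, hwmax⟩ := Finset.exists_max_image h.coeff.support D hhs
  have hlw : l w = 0 := hker w hwS
  set δ : B := D w with hδdef
  have hw1 : h.coeff w = 1 := by
    apply hhn
    have hext := extreme_of_max h.coeff.support w hwS ψ.toLinearMap LinearMap.id
      Function.injective_id ?_
    · exact hext
    · intro p hp
      have hwp := hwmax p hp
      simp only [hDdef] at hwp
      simp only [ContinuousLinearMap.coe_coe, LinearMap.id_coe, id_eq]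
      rcases (Prod.Lex.le_iff (x := toLex (ψ (emb p), toLex p)) (y := toLex (ψ (emb w), toLex w))).1 hwp with hlt | heq
      · exact ⟨hlt.le, fun he => absurd he (ne_of_lt hlt)⟩
      · exact ⟨heq.1.le, fun _ => heq.2⟩
  -- basic facts about parts
  have hpart_apply : ∀ (g : A2) (k : ℤ) (p : ℤ × ℤ),
      (part c l g k).coeff p = if c + l p = k then g.coeff p else 0 := by
    intro g k p
    simp [part, Finsupp.filter_apply, AddMonoidAlgebra.coeff_ofCoeff]
  have hpart_mem : ∀ (g : A2) (k : ℤ) (p : ℤ × ℤ),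
      p ∈ (part c l g k).coeff.support ↔ p ∈ g.coeff.support ∧ c + l p = k := by
    intro g k p
    simp [part, Finsupp.support_filter, Finset.mem_filter, AddMonoidAlgebra.coeff_ofCoeff]
  set k0 : ℤ := c + l q with hk0
  have hqP : q ∈ (part c l μ k0).coeff.support := (hpart_mem μ k0 q).2 ⟨hqS, rfl⟩
  have hPsub : ∀ k : ℤ, ∀ p ∈ (part c l μ k).coeff.support, p ∈ μ.coeff.support :=
    fun k p hp => ((hpart_mem μ k p).1 hp).1
  -- the cross-level estimate
  have claim7 : ∀ (k : ℤ) (p : ℤ × ℤ), p ∈ (part c l f k).coeff.support →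
      D p + k • δ ≤ D q := by
    intro k p hp
    rcases le_or_gt 0 k with hk | hk
    · set n : ℕ := k.toNat with hn
      have hkn : (n : ℤ) = k := Int.toNat_of_nonneg hk
      have hFne : (part c l f k).coeff.support.Nonempty := ⟨p, hp⟩
      obtain ⟨rk, hrkS, hrkmax⟩ := Finset.exists_max_image (part c l f k).coeff.support D hFne
      have hpow := key_pow D hDadd hDinj h w hwmax n
      have hmul := key_mul D hDadd hDinj (h ^ n) (part c l f k) (n • w) rk hpow.1 hrkmax
      have hval : (h ^ n * part c l f k).coeff (n • w + rk) = (part c l f k).coeff rk := by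
        rw [hmul.2, hpow.2, hw1, one_pow, one_mul]
      have hmem : (n • w + rk) ∈ (part c l μ k).coeff.support := by
        rw [hμpos k hk, Finsupp.mem_support_iff, hval]
        exact Finsupp.mem_support_iff.1 hrkS
      have hle : D (n • w + rk) ≤ D q := hDq _ (hPsub k _ hmem)
      calc D p + k • δ ≤ D rk + k • δ := add_le_add_left (hrkmax p hp) _
        _ = D (n • w + rk) := by
            rw [hDadd, hDns, hδdef, ← hkn, natCast_zsmul]
            exact add_comm _ _
        _ ≤ D q := hle
    · set n : ℕ := (-k).toNat with hn
      have hkn : (n : ℤ) = -k := Int.toNat_of_nonneg (by omega)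
      have hf : h ^ n * part c l μ k = part c l f k := hμneg k hk
      have hmulsup := (key_mul D hDadd hDinj (h ^ n) (part c l μ k) (n • w) q
        (key_pow D hDadd hDinj h w hwmax n).1 (fun x hx => hDq x (hPsub k x hx))).1
      have hple : D p ≤ D (n • w + q) := by
        apply hmulsup
        rw [hf]
        exact hp
      have hDnq : D (n • w + q) = (n : ℤ) • δ + D q := by
        rw [hDadd, hDns, hδdef, natCast_zsmul]
      rw [hDnq] at hple
      have h9 := add_le_add_left hple (k • δ)
      calc D p + k • δ ≤ (n : ℤ) • δ + D q + k • δ := h9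
        _ = D q := by rw [hkn, neg_zsmul]; abel
  -- the distinguished point of f at level k0
  have hDr : ∃ r : ℤ × ℤ, r ∈ (part c l f k0).coeff.support ∧ f.coeff r = μ.coeff q ∧
      (∀ p ∈ (part c l f k0).coeff.support, D p ≤ D r) ∧ D r + k0 • δ = D q ∧ l r = l q := by
    have hqval : (part c l μ k0).coeff q = μ.coeff q := by
      rw [hpart_apply, if_pos hk0.symm]
    rcases le_or_gt 0 k0 with hk | hk
    · set n : ℕ := k0.toNat with hn
      have hkn : (n : ℤ) = k0 := Int.toNat_of_nonneg hk
      have hFne : (part c l f k0).coeff.support.Nonempty := by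
        rcases Finset.eq_empty_or_nonempty (part c l f k0).coeff.support with he | hne
        · exfalso
          have h0 : part c l f k0 = 0 := AddMonoidAlgebra.coeff_eq_zero.1 (Finsupp.support_eq_empty.1 he)
          have : part c l μ k0 = 0 := by rw [hμpos k0 hk, h0, mul_zero]
          rw [this] at hqP
          simp at hqP
        · exact hne
      obtain ⟨r, hrS, hrmax⟩ := Finset.exists_max_image (part c l f k0).coeff.support D hFne
      have hpow := key_pow D hDadd hDinj h w hwmax n
      have hmul := key_mul D hDadd hDinj (h ^ n) (part c l f k0) (n • w) r hpow.1 hrmax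
      have hval : (h ^ n * part c l f k0).coeff (n • w + r) = (part c l f k0).coeff r := by
        rw [hmul.2, hpow.2, hw1, one_pow, one_mul]
      have hmem : (n • w + r) ∈ (part c l μ k0).coeff.support := by
        rw [hμpos k0 hk, Finsupp.mem_support_iff, hval]
        exact Finsupp.mem_support_iff.1 hrS
      have h1 : D (n • w + r) ≤ D q := hDq _ (hPsub k0 _ hmem)
      have h2 : D q ≤ D (n • w + r) := by
        apply hmul.1
        rw [← hμpos k0 hk]
        exact hqP
      have heq : q = n • w + r := hDinj (le_antisymm h2 h1)
      have hlr : c + l r = k0 := ((hpart_mem f k0 r).1 hrS).2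
      have hfr : f.coeff r = μ.coeff q := by
        have e1 : μ.coeff q = (part c l μ k0).coeff q := hqval.symm
        rw [e1, hμpos k0 hk, heq, hval, hpart_apply, if_pos hlr]
      refine ⟨r, hrS, hfr, hrmax, ?_, ?_⟩
      · have : D q = (n : ℤ) • δ + D r := by
          rw [heq, hDadd, hDns, hδdef, natCast_zsmul]
        rw [this, hkn]
        exact add_comm _ _
      · have h11 := hlr
        rw [hk0] at h11
        exact add_left_cancel h11
    · set n : ℕ := (-k0).toNat with hn
      have hkn : (n : ℤ) = -k0 := Int.toNat_of_nonneg (by omega)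
      have hf : h ^ n * part c l μ k0 = part c l f k0 := hμneg k0 hk
      have hpow := key_pow D hDadd hDinj h w hwmax n
      have hmul := key_mul D hDadd hDinj (h ^ n) (part c l μ k0) (n • w) q hpow.1
        (fun x hx => hDq x (hPsub k0 x hx))
      have hval : (part c l f k0).coeff (n • w + q) = μ.coeff q := by
        rw [← hf, hmul.2, hpow.2, hw1, one_pow, one_mul, hqval]
      have hμqne : μ.coeff q ≠ 0 := Finsupp.mem_support_iff.1 hqS
      have hrS : (n • w + q) ∈ (part c l f k0).coeff.support := by
        rw [Finsupp.mem_support_iff, hval]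
        exact hμqne
      have hlr : c + l (n • w + q) = k0 := ((hpart_mem f k0 _).1 hrS).2
      refine ⟨n • w + q, hrS, ?_, ?_, ?_, ?_⟩
      · rw [← hval, hpart_apply, if_pos hlr]
      · intro p hp
        rw [← hf] at hp
        exact hmul.1 p hp
      · have : D (n • w + q) = (n : ℤ) • δ + D q := by
          rw [hDadd, hDns, hδdef, natCast_zsmul]
        rw [this, hkn, neg_zsmul]
        abel
      · have : l (n • w + q) = l q := by
          rw [map_add, map_nsmul, hlw, smul_zero, zero_add]
        exact this
  obtain ⟨r, hrS, hrval, hrmax, hrD, hrl⟩ := hDr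
  have hrF : r ∈ f.coeff.support := ((hpart_mem f k0 r).1 hrS).1
  -- the twist map
  set T : (ℤ × ℤ) →ₗ[ℤ] ℤ × ℤ := LinearMap.id + l.smulRight w with hTdef
  have hTapp : ∀ p : ℤ × ℤ, T p = p + l p • w := by
    intro p
    simp [hTdef, LinearMap.smulRight_apply]
  have hTl : ∀ p : ℤ × ℤ, l (T p) = l p := by
    intro p
    rw [hTapp, map_add, map_smul, hlw]
    simp
  have hTinj : Function.Injective T := by
    intro p p' hpp'
    have hl' : l p = l p' := by rw [← hTl p, ← hTl p', hpp']
    have h2 := hpp'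
    rw [hTapp, hTapp, hl'] at h2
    exact add_right_cancel h2
  -- the twisted functional
  obtain ⟨lt, hlt⟩ := lift1 l
  set Ψ : (ℝ × ℝ) →ₗ[ℝ] ℝ := ψ.toLinearMap + ψ (emb w) • lt with hΨdef
  have hΨapp : ∀ p : ℤ × ℤ, Ψ (emb p) = ψ (emb p) + (l p : ℝ) * ψ (emb w) := by
    intro p
    simp only [hΨdef, LinearMap.add_apply, LinearMap.smul_apply, smul_eq_mul,
      ContinuousLinearMap.coe_coe, hlt p]
    ring
  have hD' : ∀ p : ℤ × ℤ, toLex (Ψ (emb p), toLex (T p)) = D p + (l p) • δ := by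
    intro p
    have h1 : D p + (l p) • δ
        = toLex (ψ (emb p) + (l p) • ψ (emb w), toLex p + (l p) • toLex w) := rfl
    rw [h1]
    congr 1
    refine Prod.ext ?_ ?_
    · rw [hΨapp]
      simp [zsmul_eq_mul]
    · show toLex (T p) = toLex p + (l p) • toLex w
      rw [hTapp]
      rfl
  -- r maximizes the twisted order over the support of f
  have hmax' : ∀ p ∈ f.coeff.support,
      toLex (Ψ (emb p), toLex (T p)) ≤ toLex (Ψ (emb r), toLex (T r)) := by
    intro p hp
    rw [hD' p, hD' r]
    have hpF : p ∈ (part c l f (c + l p)).coeff.support := (hpart_mem f _ p).2 ⟨hp, rfl⟩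
    have h7 := claim7 (c + l p) p hpF
    have h8 : D p + ((c : ℤ) + l p) • δ ≤ D r + ((c : ℤ) + l q) • δ := by
      calc D p + ((c : ℤ) + l p) • δ ≤ D q := h7
        _ = D r + ((c : ℤ) + l q) • δ := by rw [← hrD, hk0]
    rw [hrl]
    have h9 : c • δ + (D p + (l p) • δ) ≤ c • δ + (D r + (l q) • δ) := by
      have h10 := h8
      rw [add_zsmul, add_zsmul] at h10
      calc c • δ + (D p + (l p) • δ) = D p + (c • δ + (l p) • δ) := by abel
        _ ≤ D r + (c • δ + (l q) • δ) := h10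
        _ = c • δ + (D r + (l q) • δ) := by abel
    exact le_of_add_le_add_left h9
  -- hence emb r is a vertex of the Newton polygon of f
  have hrext : emb r ∈ Set.extremePoints ℝ (convexHull ℝ (emb '' (f.coeff.support : Set (ℤ × ℤ)))) := by
    apply extreme_of_max f.coeff.support r hrF Ψ T hTinj
    intro p hp
    rcases (Prod.Lex.le_iff (x := toLex (Ψ (emb p), toLex (T p))) (y := toLex (Ψ (emb r), toLex (T r)))).1
      (hmax' p hp) with hlt' | heq
    · exact ⟨hlt'.le, fun he => absurd he (ne_of_lt hlt')⟩
    · exact ⟨heq.1.le, fun _ => heq.2⟩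
  have hfr1 : f.coeff r = 1 := hfn r hrext
  rw [← hrval]
  exact hfr1
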